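/- Let L be a locally finite modular lattice and let S be a set of covering pairs of L that is closed under cover-projectivity. Then the relation ∼ is transitive: for all x, y, z ∈ L, if x ∼ y and y ∼ z then x ∼ z. -/

import Mathlib

/-- A set `S` of covering pairs of a lattice is closed under cover-projectivity. -/
def CoverProjClosed {L : Type*} [Lattice L] (S : Set (L × L)) : Prop :=
  ∀ x y : L, x ≠ y → x ⊓ y ⋖ x → x ⊓ y ⋖ y → x ⋖ x ⊔ y → y ⋖ x ⊔ y →
    (((x ⊓ y, x) ∈ S ↔ (y, x ⊔ y) ∈ S) ∧ ((x ⊓ y, y) ∈ S ↔ (x, x ⊔ y) ∈ S))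

/-- `Sim S x y` holds iff every covering path from `x ⊓ y` to `x ⊔ y` contains no covering
pair belonging to `S`. -/
def Sim {L : Type*} [Lattice L] (S : Set (L × L)) (x y : L) : Prop :=
  ∀ (n : ℕ) (c : ℕ → L), c 0 = x ⊓ y → c n = x ⊔ y → (∀ i < n, c i ⋖ c (i + 1)) →
    ∀ i < n, (c i, c (i + 1)) ∉ S

namespace SimAux

set_option linter.unusedSectionVars false

variable {L : Type*} [Lattice L]

/-- `c` is a covering path of length `n` from `u` to `v`. -/
def PathB (c : ℕ → L) (n : ℕ) (u v : L) : Prop :=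
  c 0 = u ∧ c n = v ∧ ∀ i < n, c i ⋖ c (i + 1)

/-- The first `n` covering pairs of `c` avoid `S`. -/
def AvoidsB (S : Set (L × L)) (c : ℕ → L) (n : ℕ) : Prop :=
  ∀ i < n, (c i, c (i + 1)) ∉ S

/-- There is a covering path from `u` to `v` avoiding `S`. -/
def Good (S : Set (L × L)) (u v : L) : Prop :=
  ∃ n c, PathB c n u v ∧ AvoidsB S c n

theorem PathB.mono {c : ℕ → L} {n : ℕ} {u v : L} (h : PathB c n u v) :
    ∀ {i j : ℕ}, i ≤ j → j ≤ n → c i ≤ c j := by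
  intro i j hij
  induction j, hij using Nat.le_induction with
  | base => intro _; exact le_rfl
  | succ j hij ihj =>
    intro hjn
    exact (ihj (by omega)).trans (h.2.2 j (by omega)).le

theorem PathB.le {c : ℕ → L} {n : ℕ} {u v : L} (h : PathB c n u v) {i : ℕ} (hi : i ≤ n) :
    c i ≤ v := h.2.1 ▸ h.mono hi le_rfl

theorem PathB.tail {c : ℕ → L} {k : ℕ} {u v : L} (h : PathB c (k + 1) u v) :
    PathB (fun i => c (i + 1)) k (c 1) v :=
  ⟨rfl, h.2.1, fun i hi => h.2.2 (i + 1) (by omega)⟩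

theorem AvoidsB.tail {S : Set (L × L)} {c : ℕ → L} {k : ℕ} (h : AvoidsB S c (k + 1)) :
    AvoidsB S (fun i => c (i + 1)) k := fun i hi => h (i + 1) (by omega)

theorem PathB.head {c : ℕ → L} {k : ℕ} {u v : L} (h : PathB c (k + 1) u v) :
    PathB c k u (c k) := ⟨h.1, rfl, fun i hi => h.2.2 i (by omega)⟩

theorem AvoidsB.head {S : Set (L × L)} {c : ℕ → L} {k : ℕ} (h : AvoidsB S c (k + 1)) :
    AvoidsB S c k := fun i hi => h i (by omega)

/-- Prepend an element to a path. -/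
def consP (u : L) (c : ℕ → L) : ℕ → L := fun i => match i with
  | 0 => u
  | j + 1 => c j

@[simp] theorem consP_zero (u : L) (c : ℕ → L) : consP u c 0 = u := rfl
@[simp] theorem consP_succ (u : L) (c : ℕ → L) (j : ℕ) : consP u c (j + 1) = c j := rfl

theorem PathB.cons {c : ℕ → L} {n : ℕ} {w v : L} (h : PathB c n w v) {u : L} (huw : u ⋖ w) :
    PathB (consP u c) (n + 1) u v := by
  refine ⟨rfl, by simp [h.2.1], ?_⟩
  intro i hi
  match i with
  | 0 => simpa [h.1] using huw
  | j + 1 => simpa using h.2.2 j (by omega)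

theorem AvoidsB.cons {S : Set (L × L)} {c : ℕ → L} {n : ℕ} {u w : L} (hc0 : c 0 = w)
    (huw : (u, w) ∉ S) (h : AvoidsB S c n) : AvoidsB S (consP u c) (n + 1) := by
  intro i hi
  match i with
  | 0 => simpa [hc0] using huw
  | j + 1 => simpa using h j (by omega)

/-- Concatenation of two paths. -/
def catP (c d : ℕ → L) (n : ℕ) : ℕ → L := fun i => if i < n then c i else d (i - n)

theorem catP_left {c d : ℕ → L} {n : ℕ} (h0 : d 0 = c n) {i : ℕ} (hi : i ≤ n) :
    catP c d n i = c i := by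
  rcases lt_or_eq_of_le hi with h | rfl
  · simp [catP, h]
  · simp [catP, h0]

theorem catP_right (c d : ℕ → L) (n i : ℕ) : catP c d n (n + i) = d i := by
  simp [catP]

theorem PathB.cat {c d : ℕ → L} {n m : ℕ} {u w v : L} (hc : PathB c n u w)
    (hd : PathB d m w v) : PathB (catP c d n) (n + m) u v := by
  have h0 : d 0 = c n := by rw [hd.1, hc.2.1]
  refine ⟨by rw [catP_left h0 (Nat.zero_le n), hc.1], ?_, ?_⟩
  · have := catP_right c d n m
    rw [this, hd.2.1]
  · intro i hi
    rcases Nat.lt_or_ge i n with h | h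
    · rw [catP_left h0 h.le, catP_left h0 (by omega)]
      exact hc.2.2 i h
    · obtain ⟨j, rfl⟩ : ∃ j, i = n + j := ⟨i - n, by omega⟩
      rw [catP_right, show n + j + 1 = n + (j + 1) by omega, catP_right]
      exact hd.2.2 j (by omega)

theorem AvoidsB.cat {S : Set (L × L)} {c d : ℕ → L} {n m : ℕ} (h0 : d 0 = c n)
    (hc : AvoidsB S c n) (hd : AvoidsB S d m) : AvoidsB S (catP c d n) (n + m) := by
  intro i hi
  rcases Nat.lt_or_ge i n with h | h
  · rw [catP_left h0 h.le, catP_left h0 (by omega)]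
    exact hc i h
  · obtain ⟨j, rfl⟩ : ∃ j, i = n + j := ⟨i - n, by omega⟩
    rw [catP_right, show n + j + 1 = n + (j + 1) by omega, catP_right]
    exact hd j (by omega)

theorem Good.trans {S : Set (L × L)} {u w v : L} (h1 : Good S u w) (h2 : Good S w v) :
    Good S u v := by
  obtain ⟨n, c, hc, hcA⟩ := h1
  obtain ⟨m, d, hd, hdA⟩ := h2
  exact ⟨n + m, catP c d n, hc.cat hd, hcA.cat (by rw [hd.1, hc.2.1]) hdA⟩

theorem pathB_single {u w : L} (h : u ⋖ w) : PathB (consP u (fun _ => w)) 1 u w := by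
  refine ⟨rfl, rfl, ?_⟩
  intro i hi
  match i, hi with
  | 0, _ => simpa using h

theorem good_single {S : Set (L × L)} {u w : L} (h : u ⋖ w) (hS : (u, w) ∉ S) :
    Good S u w := by
  refine ⟨1, consP u (fun _ => w), pathB_single h, ?_⟩
  intro i hi
  match i, hi with
  | 0, _ => simpa using hS

theorem good_refl (S : Set (L × L)) (u : L) : Good S u u :=
  ⟨0, fun _ => u, ⟨rfl, rfl, fun i hi => by omega⟩, fun i hi => by omega⟩

/-- Existence of a covering path between comparable elements in a locally finite lattice. -/
theorem exists_pathB_aux [LocallyFiniteOrder L] :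
    ∀ (N : ℕ) (u v : L), (Finset.Icc u v).card ≤ N → u ≤ v → ∃ n c, PathB c n u v := by
  intro N
  induction N with
  | zero =>
    intro u v hcard huv
    have : 0 < (Finset.Icc u v).card := Finset.card_pos.2 ⟨u, Finset.mem_Icc.2 ⟨le_rfl, huv⟩⟩
    omega
  | succ N ih =>
    intro u v hcard huv
    classical
    rcases eq_or_lt_of_le huv with rfl | hlt
    · exact ⟨0, fun _ => u, rfl, rfl, fun i hi => by omega⟩
    · obtain ⟨w, hwmem, hwmin⟩ : ∃ w ∈ (Finset.Icc u v).filter (fun t => u < t),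
          ∀ t ∈ (Finset.Icc u v).filter (fun t => u < t), ¬ t < w := by
        obtain ⟨w, hw, hmin⟩ := Finset.exists_minimal
          (s := (Finset.Icc u v).filter (fun t => u < t))
          ⟨v, Finset.mem_filter.2 ⟨Finset.mem_Icc.2 ⟨huv, le_rfl⟩, hlt⟩⟩
        exact ⟨w, hw, fun t ht htw => htw.not_ge (hmin ht htw.le)⟩
      simp only [Finset.mem_filter, Finset.mem_Icc] at hwmem
      have huw : u ⋖ w := by
        refine covBy_of_eq_or_eq hwmem.2 (fun t h1 h2 => ?_)
        rcases eq_or_lt_of_le h1 with rfl | h1'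
        · exact Or.inl rfl
        rcases eq_or_lt_of_le h2 with rfl | h2'
        · exact Or.inr rfl
        exact absurd h2' (hwmin t (by simp [Finset.mem_filter, Finset.mem_Icc,
          h1', h1'.le, h2.trans hwmem.1.2]))
      have hwv : w ≤ v := hwmem.1.2
      have hsub : Finset.Icc w v ⊂ Finset.Icc u v := by
        refine Finset.ssubset_iff_of_subset (Finset.Icc_subset_Icc huw.le le_rfl) |>.2 ?_
        exact ⟨u, by simp [huv], by simp [huw.lt.not_ge]⟩
      obtain ⟨n, c, hc⟩ := ih w v (by have := Finset.card_lt_card hsub; omega) hwv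
      exact ⟨n + 1, consP u c, hc.cons huw⟩

theorem exists_pathB [LocallyFiniteOrder L] {u v : L} (huv : u ≤ v) :
    ∃ n c, PathB c n u v :=
  exists_pathB_aux (Finset.Icc u v).card u v le_rfl huv

end SimAux
namespace SimAux

variable {L : Type*} [Lattice L] {S : Set (L × L)}

/-- Jordan–Hölder-type lemma: if one covering path from `u` to `v` avoids `S`, then every
covering path from `u` to `v` has the same length and also avoids `S`. -/
theorem jordan_holder [LocallyFiniteOrder L] [IsModularLattice L] (hS : CoverProjClosed S) :
    ∀ (n : ℕ) {u v : L} {c d : ℕ → L} {m : ℕ}, PathB c n u v → AvoidsB S c n →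
      PathB d m u v → m = n ∧ AvoidsB S d m := by
  intro n
  induction n using Nat.strong_induction_on with
  | _ n ih =>
  intro u v c d m hc hcA hd
  match n, m with
  | 0, 0 => exact ⟨rfl, fun i hi => by omega⟩
  | 0, j + 1 =>
    have huv : u = v := hc.1 ▸ hc.2.1
    have h1 : u ⋖ d 1 := hd.1 ▸ hd.2.2 0 (by omega)
    have h2 : d 1 ≤ u := huv ▸ hd.le (i := 1) (by omega)
    exact absurd h2 h1.lt.not_ge
  | k + 1, 0 =>
    have huv : u = v := hd.1 ▸ hd.2.1
    have h1 : u ⋖ c 1 := hc.1 ▸ hc.2.2 0 (by omega)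
    have h2 : c 1 ≤ u := huv ▸ hc.le (i := 1) (by omega)
    exact absurd h2 h1.lt.not_ge
  | k + 1, j + 1 =>
    have hc' := hc.tail
    have hcA' := hcA.tail
    have hd' := hd.tail
    have hc01 : (c 0, c 1) ∉ S := hcA 0 (by omega)
    by_cases hcd : c 1 = d 1
    · rw [← hcd] at hd'
      obtain ⟨hjk, hdA'⟩ := ih k (by omega) hc' hcA' hd'
      refine ⟨by omega, ?_⟩
      intro i hi
      match i with
      | 0 =>
        have : (d 0, d 1) = (c 0, c 1) := by rw [hd.1, hc.1, hcd]
        rw [this]; exact hc01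
      | i + 1 => exact hdA' i (by omega)
    · set a := c 1 with ha
      set b := d 1 with hb
      have hua : u ⋖ a := hc.1 ▸ hc.2.2 0 (by omega)
      have hub : u ⋖ b := hd.1 ▸ hd.2.2 0 (by omega)
      have hinf : a ⊓ b = u := by
        rcases hua.eq_or_eq (le_inf hua.le hub.le) inf_le_left with h | h
        · exact h
        · have hab : a ≤ b := h ▸ inf_le_right
          rcases hub.eq_or_eq hua.le hab with h' | h'
          · exact absurd h'.symm hua.lt.ne
          · exact absurd h' hcd
      have haw : a ⋖ a ⊔ b := CovBy.sup_of_inf_right (hinf ▸ hub)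
      have hbw : b ⋖ a ⊔ b := CovBy.sup_of_inf_left (hinf ▸ hua)
      have hwv : a ⊔ b ≤ v := sup_le (hc.le (i := 1) (by omega)) (hd.le (i := 1) (by omega))
      obtain ⟨t, r, hr⟩ := exists_pathB hwv
      -- path `a ⋖ a⊔b`, then `r`, is a path from `a` to `v`
      have hP1 : PathB (consP a r) (t + 1) a v := hr.cons haw
      obtain ⟨hlen1, hP1A⟩ := ih k (by omega) hc' hcA' hP1
      have hawS : (a, a ⊔ b) ∉ S := by
        have := hP1A 0 (by omega)
        simpa [hr.1] using this
      have hrA : AvoidsB S r t := fun i hi => by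
        have := hP1A (i + 1) (by omega)
        simpa using this
      obtain ⟨hiff1, hiff2⟩ := hS a b hcd (hinf ▸ hua) (hinf ▸ hub) haw hbw
      rw [hinf] at hiff1 hiff2
      have hubS : (u, b) ∉ S := fun h => hawS (hiff2.1 h)
      have hbwS : (b, a ⊔ b) ∉ S := fun h => (hc.1 ▸ hc01) (hiff1.2 h)
      -- path `b ⋖ a⊔b`, then `r`, is a path from `b` to `v` of length `t+1 = k`, avoiding S
      have hP2 : PathB (consP b r) (t + 1) b v := hr.cons hbw
      have hP2A : AvoidsB S (consP b r) (t + 1) := AvoidsB.cons hr.1 hbwS hrA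
      rw [hlen1] at hP2 hP2A
      obtain ⟨hjk, hdA'⟩ := ih k (by omega) hP2 hP2A hd'
      refine ⟨by omega, ?_⟩
      intro i hi
      match i with
      | 0 =>
        have : (d 0, d 1) = (u, b) := by rw [hd.1]
        rw [this]; exact hubS
      | i + 1 => exact hdA' i (by omega)

end SimAux
namespace SimAux

variable {L : Type*} [Lattice L] {S : Set (L × L)} [IsModularLattice L]

/-- Transferring a single `S`-free cover `(u, w)` up along a path from `u` to `a`,
where `a ⊓ w = u`. -/
theorem projUp (hS : CoverProjClosed S) :
    ∀ (k : ℕ) {u w a : L} {c : ℕ → L}, PathB c k u a → u ⋖ w → a ⊓ w = u → ¬ w ≤ a →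
      (u, w) ∉ S → a ⋖ a ⊔ w ∧ (a, a ⊔ w) ∉ S := by
  intro k
  induction k with
  | zero =>
    intro u w a c hc huw hinf hwa hnS
    have hau : a = u := hc.1 ▸ hc.2.1.symm
    subst hau
    have : a ⊔ w = w := sup_eq_right.2 huw.le
    rw [this]
    exact ⟨huw, hnS⟩
  | succ k ihk =>
    intro u w a c hc huw hinf hwa hnS
    set e := c 1 with he
    have hue : u ⋖ e := hc.1 ▸ hc.2.2 0 (by omega)
    have hea : e ≤ a := hc.2.1 ▸ hc.mono (i := 1) (by omega) (by omega)
    have hwe : w ≠ e := fun h => hwa (h ▸ hea)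
    have hweinf : w ⊓ e = u := by
      rcases huw.eq_or_eq (le_inf huw.le hue.le) inf_le_left with h | h
      · exact h
      · exact absurd (h ▸ inf_le_right : w ≤ e).trans (fun f => hwa (f hea))
    have hwW : w ⋖ w ⊔ e := CovBy.sup_of_inf_right (hweinf ▸ hue)
    have heW : e ⋖ w ⊔ e := CovBy.sup_of_inf_left (hweinf ▸ huw)
    obtain ⟨hiff1, hiff2⟩ := hS w e hwe (hweinf ▸ huw) (hweinf ▸ hue) hwW heW
    rw [hweinf] at hiff1 hiff2
    have heS : (e, e ⊔ w) ∉ S := by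
      rw [sup_comm]
      exact fun h => hnS (hiff1.2 h)
    have heW' : e ⋖ e ⊔ w := by rw [sup_comm]; exact heW
    have hinf' : a ⊓ (e ⊔ w) = e := by
      rw [inf_comm, sup_inf_assoc_of_le w hea, inf_comm, hinf, sup_eq_left.2 hue.le]
    have hwa' : ¬ e ⊔ w ≤ a := fun h => hwa (le_sup_right.trans h)
    obtain ⟨h1, h2⟩ := ihk hc.tail heW' hinf' hwa' heS
    have hsup : a ⊔ (e ⊔ w) = a ⊔ w := by
      rw [← sup_assoc, sup_eq_left.2 hea]
    rw [hsup] at h1 h2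
    exact ⟨h1, h2⟩

/-- Transferring a single `S`-free cover `(w, u)` down along a path from `a` to `u`,
where `a ⊔ w = u`. -/
theorem projDown (hS : CoverProjClosed S) :
    ∀ (k : ℕ) {u w a : L} {c : ℕ → L}, PathB c k a u → w ⋖ u → a ⊔ w = u → ¬ a ≤ w →
      (w, u) ∉ S → a ⊓ w ⋖ a ∧ (a ⊓ w, a) ∉ S := by
  intro k
  induction k with
  | zero =>
    intro u w a c hc hwu hsup haw hnS
    have hau : a = u := hc.1.symm.trans hc.2.1
    subst hau
    have : a ⊓ w = w := inf_eq_right.2 hwu.le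
    rw [this]
    exact ⟨hwu, hnS⟩
  | succ k ihk =>
    intro u w a c hc hwu hsup haw hnS
    set e := c k with he
    have heu : e ⋖ u := hc.2.1 ▸ hc.2.2 k (by omega)
    have hae : a ≤ e := hc.1 ▸ hc.mono (j := k) (by omega) (by omega)
    have hwe : w ≠ e := fun h => haw (h ▸ hae)
    have hwesup : w ⊔ e = u := by
      rcases hwu.eq_or_eq le_sup_left (sup_le hwu.le heu.le) with h | h
      · exact absurd (h ▸ le_sup_right : e ≤ w) (fun f => haw (hae.trans f))
      · exact h
    have hwW : w ⋖ w ⊔ e := by rw [hwesup]; exact hwu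
    have heW : e ⋖ w ⊔ e := by rw [hwesup]; exact heu
    have hlow1 : w ⊓ e ⋖ w := CovBy.inf_of_sup_right heW
    have hlow2 : w ⊓ e ⋖ e := CovBy.inf_of_sup_left hwW
    obtain ⟨hiff1, hiff2⟩ := hS w e hwe hlow1 hlow2 hwW heW
    rw [hwesup] at hiff1 hiff2
    have hweS : (w ⊓ e, e) ∉ S := fun h => hnS (hiff2.1 h)
    have hsup' : a ⊔ (w ⊓ e) = e := by
      rw [← sup_inf_assoc_of_le w hae, hsup]
      exact inf_eq_right.2 heu.le
    have haw' : ¬ a ≤ w ⊓ e := fun h => haw (h.trans inf_le_left)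
    obtain ⟨h1, h2⟩ := ihk hc.head hlow2 hsup' haw' hweS
    have hinfeq : a ⊓ (w ⊓ e) = a ⊓ w := by
      rw [inf_comm w e, ← inf_assoc, inf_eq_left.2 hae]
    rw [hinfeq] at h1 h2
    exact ⟨h1, h2⟩

end SimAux
namespace SimAux

variable {L : Type*} [Lattice L] {S : Set (L × L)} [IsModularLattice L] [LocallyFiniteOrder L]

/-- Transfer an `S`-avoiding path witnessing `Good S (a ⊓ b) b` to one for `Good S a (a ⊔ b)`. -/
theorem transferUp (hS : CoverProjClosed S) :
    ∀ (n : ℕ) {a b : L} {c : ℕ → L}, PathB c n (a ⊓ b) b → AvoidsB S c n →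
      Good S a (a ⊔ b) := by
  intro n
  induction n with
  | zero =>
    intro a b c hc _
    have hba : b ≤ a := (hc.1.symm.trans hc.2.1) ▸ inf_le_left
    rw [sup_eq_left.2 hba]
    exact good_refl S a
  | succ k ihk =>
    intro a b c hc hcA
    set e := c 1 with he
    have h1 : a ⊓ b ⋖ e := hc.1 ▸ hc.2.2 0 (by omega)
    have heb : e ≤ b := hc.2.1 ▸ hc.mono (i := 1) (by omega) (by omega)
    have hinf : a ⊓ e = a ⊓ b :=
      le_antisymm (le_inf inf_le_left (inf_le_right.trans heb))
        (le_inf inf_le_left h1.le)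
    have hne : ¬ e ≤ a := fun h => h1.lt.not_ge (le_inf h heb)
    obtain ⟨t, r, hr⟩ := exists_pathB (inf_le_left : a ⊓ b ≤ a)
    obtain ⟨hcov, hnotS⟩ := projUp hS t hr h1 hinf hne (hc.1 ▸ hcA 0 (by omega))
    have hG1 : Good S a (a ⊔ e) := good_single hcov hnotS
    have hinf2 : (a ⊔ e) ⊓ b = e := by
      rw [sup_comm, sup_inf_assoc_of_le a heb]
      exact sup_eq_left.2 h1.le
    have htail : PathB (fun i => c (i + 1)) k ((a ⊔ e) ⊓ b) b := by
      rw [hinf2]; exact hc.tail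
    have hG2 : Good S (a ⊔ e) ((a ⊔ e) ⊔ b) := ihk htail hcA.tail
    have hsup2 : (a ⊔ e) ⊔ b = a ⊔ b := by rw [sup_assoc, sup_eq_right.2 heb]
    rw [hsup2] at hG2
    exact hG1.trans hG2

/-- Transfer an `S`-avoiding path witnessing `Good S a (a ⊔ b)` to one for `Good S (a ⊓ b) b`. -/
theorem transferDown (hS : CoverProjClosed S) :
    ∀ (n : ℕ) {a b : L} {c : ℕ → L}, PathB c n a (a ⊔ b) → AvoidsB S c n →
      Good S (a ⊓ b) b := by
  intro n
  induction n with
  | zero =>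
    intro a b c hc _
    have haab : a = a ⊔ b := hc.1.symm.trans hc.2.1
    have hba : b ≤ a := by rw [haab]; exact le_sup_right
    rw [inf_eq_right.2 hba]
    exact good_refl S b
  | succ k ihk =>
    intro a b c hc hcA
    set p := c k with hpdef
    have hp : p ⋖ a ⊔ b := hc.2.1 ▸ hc.2.2 k (by omega)
    have hap : a ≤ p := hc.1 ▸ hc.mono (i := 0) (j := k) (by omega) (by omega)
    have hbp : ¬ b ≤ p := fun h => hp.lt.not_ge (sup_le hap h)
    have hsup : b ⊔ p = a ⊔ b :=
      le_antisymm (sup_le le_sup_right hp.le) (sup_le (hap.trans le_sup_right) le_sup_left)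
    obtain ⟨t, r, hr⟩ := exists_pathB (le_sup_right : b ≤ a ⊔ b)
    obtain ⟨hcov, hnotS⟩ := projDown hS t hr hp hsup hbp (hc.2.1 ▸ hcA k (by omega))
    have hG2 : Good S (b ⊓ p) b := good_single hcov hnotS
    have hsup' : a ⊔ (b ⊓ p) = p := by
      rw [← sup_inf_assoc_of_le b hap]
      exact inf_eq_right.2 hp.le
    have hhead : PathB c k a (a ⊔ (b ⊓ p)) := by rw [hsup']; exact hc.head
    have hG1 : Good S (a ⊓ (b ⊓ p)) (b ⊓ p) := ihk hhead hcA.head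
    have hinfeq : a ⊓ (b ⊓ p) = a ⊓ b := by
      rw [← inf_assoc, inf_eq_left.2 (inf_le_left.trans hap : a ⊓ b ≤ p)]
    rw [hinfeq] at hG1
    exact hG1.trans hG2

theorem Good.up (hS : CoverProjClosed S) {a b : L} (h : Good S (a ⊓ b) b) :
    Good S a (a ⊔ b) := by
  obtain ⟨n, c, hc, hcA⟩ := h
  exact transferUp hS n hc hcA

theorem Good.down (hS : CoverProjClosed S) {a b : L} (h : Good S a (a ⊔ b)) :
    Good S (a ⊓ b) b := by
  obtain ⟨n, c, hc, hcA⟩ := h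
  exact transferDown hS n hc hcA

theorem Good.mono' (hS : CoverProjClosed S) {u v a b : L} (h : Good S u v) (h1 : u ≤ a)
    (h2 : a ≤ b) (h3 : b ≤ v) : Good S a b := by
  obtain ⟨n, cP, hP, hPA⟩ := h
  obtain ⟨nA, A, hA⟩ := exists_pathB h1
  obtain ⟨nB, B, hB⟩ := exists_pathB h2
  obtain ⟨nC, C, hC⟩ := exists_pathB h3
  have hBC : PathB (catP B C nB) (nB + nC) a v := hB.cat hC
  have hD : PathB (catP A (catP B C nB) nA) (nA + (nB + nC)) u v := hA.cat hBC
  obtain ⟨-, hDA⟩ := jordan_holder hS n hP hPA hD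
  refine ⟨nB, B, hB, ?_⟩
  intro i hi
  have e1 : catP A (catP B C nB) nA (nA + i) = B i := by
    rw [catP_right, catP_left (by rw [hC.1, hB.2.1]) hi.le]
  have e2 : catP A (catP B C nB) nA (nA + i + 1) = B (i + 1) := by
    rw [show nA + i + 1 = nA + (i + 1) by omega, catP_right,
      catP_left (by rw [hC.1, hB.2.1]) (by omega)]
  have := hDA (nA + i) (by omega)
  rw [e1, e2] at this
  exact this

theorem sim_to_good {x y : L} (h : Sim S x y) : Good S (x ⊓ y) (x ⊔ y) := by
  obtain ⟨n, c, hc⟩ := exists_pathB (inf_le_sup : x ⊓ y ≤ x ⊔ y)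
  exact ⟨n, c, hc, h n c hc.1 hc.2.1 hc.2.2⟩

theorem good_to_sim (hS : CoverProjClosed S) {x y : L} (h : Good S (x ⊓ y) (x ⊔ y)) :
    Sim S x y := by
  obtain ⟨n, cP, hP, hPA⟩ := h
  intro m c h0 hn hcov i hi
  exact (jordan_holder hS n hP hPA ⟨h0, hn, hcov⟩).2 i hi

theorem key (hS : CoverProjClosed S) (x y z : L) (h1 : Good S (x ⊓ y) (x ⊔ y))
    (h2 : Good S (y ⊓ z) (y ⊔ z)) : Good S x (x ⊔ z) := by
  have A1 : Good S x (x ⊔ y) := Good.mono' hS h1 inf_le_left le_sup_left le_rfl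
  have A2 : Good S ((x ⊔ y) ⊓ z) z :=
    Good.mono' hS h2 (inf_le_inf_right z le_sup_right) inf_le_right le_sup_right
  have A3 : Good S (x ⊔ y) ((x ⊔ y) ⊔ z) := Good.up hS A2
  have A4 : Good S x (x ⊔ y ⊔ z) := A1.trans A3
  exact Good.mono' hS A4 le_rfl le_sup_left
    (sup_le (le_sup_left.trans le_sup_left) le_sup_right)

end SimAux

open SimAux in
/-- The relation `∼` is transitive. -/
theorem stmt4 {L : Type*} [Lattice L] [LocallyFiniteOrder L] [IsModularLattice L]
    (S : Set (L × L)) (hS : CoverProjClosed S) :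
    ∀ x y z : L, Sim S x y → Sim S y z → Sim S x z := by
  intro x y z hxy hyz
  have h1 : Good S (x ⊓ y) (x ⊔ y) := sim_to_good hxy
  have h2 : Good S (y ⊓ z) (y ⊔ z) := sim_to_good hyz
  have B1 : Good S x (x ⊔ z) := key hS x y z h1 h2
  have h1' : Good S (z ⊓ y) (z ⊔ y) := by rwa [inf_comm z y, sup_comm z y]
  have h2' : Good S (y ⊓ x) (y ⊔ x) := by rwa [inf_comm y x, sup_comm y x]
  have B2 : Good S z (z ⊔ x) := key hS z y x h1' h2'
  have B3 : Good S (z ⊓ x) x := Good.down hS B2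
  rw [inf_comm z x] at B3
  exact good_to_sim hS (B3.trans B1)
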